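/- arXiv:2304.04872 — 4 statements merged into one kernel-verified Lean document; each statement's English description precedes it below -/
import Mathlib

section
/- Let R be a commutative ring, M an R-module, N a semimodule over the semiring fgId(R), and let w : M → N be a u_R-seminorm. Then there exists a unique additive monoid homomorphism ŵ : fgMod(M) → N such that ŵ(R·m) = w(m) for every m ∈ M (so w = ŵ ∘ u_M); explicitly, ŵ(R·m₁ + ⋯ + R·mₖ) = w(m₁) + ⋯ + w(mₖ), and this value is independent of the chosen generators. Moreover ŵ satisfies ŵ(ρ·μ) ≤ ρ·ŵ(μ) for all ρ ∈ fgId(R) and μ ∈ fgMod(M), where ≤ is the canonical order x ≤ y iff x + y = y. -/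
def FGIdeal (R : Type*) [CommRing R] : Type _ := {I : Ideal R // I.FG}

namespace FGIdeal

variable {R : Type*} [CommRing R]

instance : Zero (FGIdeal R) := ⟨⟨⊥, Submodule.fg_bot⟩⟩

instance : One (FGIdeal R) := ⟨⟨1, ⟨{1}, by simp [Ideal.one_eq_top]⟩⟩⟩

instance : Add (FGIdeal R) :=
  ⟨fun I J => ⟨I.1 + J.1, by rw [Submodule.add_eq_sup]; exact Submodule.FG.sup I.2 J.2⟩⟩

instance : Mul (FGIdeal R) := ⟨fun I J => ⟨I.1 * J.1, Submodule.FG.mul I.2 J.2⟩⟩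

instance : SMul ℕ (FGIdeal R) :=
  ⟨fun n I => ⟨n • I.1, by
    induction n with
    | zero => simp; exact Submodule.fg_bot
    | succ n ih => rw [succ_nsmul, Submodule.add_eq_sup]; exact Submodule.FG.sup ih I.2⟩⟩

instance : Pow (FGIdeal R) ℕ := ⟨fun I n => ⟨I.1 ^ n, Submodule.FG.pow I.2 n⟩⟩

instance : NatCast (FGIdeal R) :=
  ⟨fun n => ⟨(n : Ideal R), by
    induction n with
    | zero => simp; exact Submodule.fg_bot
    | succ n ih =>
        rw [Nat.cast_succ, Submodule.add_eq_sup]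
        exact Submodule.FG.sup ih ⟨{1}, by simp [Ideal.one_eq_top]⟩⟩⟩

instance : CommSemiring (FGIdeal R) :=
  Subtype.val_injective.commSemiring (fun I : FGIdeal R => I.1) rfl rfl
    (fun _ _ => rfl) (fun _ _ => rfl) (fun _ _ => rfl) (fun _ _ => rfl) (fun _ => rfl)

end FGIdeal

/-- The universal integral seminorm `u_R : R → fgId(R)`, `a ↦ R·a`. -/
def uRfg {R : Type*} [CommRing R] (a : R) : FGIdeal R := ⟨Ideal.span {a}, Submodule.fg_span_singleton a⟩

/-- The type of finitely generated `R`-submodules of `M`. -/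
def FGSubmodule (R M : Type*) [CommRing R] [AddCommGroup M] [Module R M] : Type _ :=
  {N : Submodule R M // N.FG}

namespace FGSubmodule

variable {R M : Type*} [CommRing R] [AddCommGroup M] [Module R M]

instance : Zero (FGSubmodule R M) := ⟨⟨⊥, Submodule.fg_bot⟩⟩

instance : Add (FGSubmodule R M) := ⟨fun A B => ⟨A.1 ⊔ B.1, Submodule.FG.sup A.2 B.2⟩⟩

instance : AddCommMonoid (FGSubmodule R M) where
  add_assoc A B C := Subtype.ext (sup_assoc _ _ _)
  zero_add A := Subtype.ext (bot_sup_eq _)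
  add_zero A := Subtype.ext (sup_bot_eq _)
  add_comm A B := Subtype.ext (sup_comm _ _)
  nsmul := nsmulRec

/-- The action of `fgId(R)` on `fgMod(M)`, `(I, N) ↦ I • N`. -/
instance : SMul (FGIdeal R) (FGSubmodule R M) :=
  ⟨fun ρ ν => ⟨ρ.1 • ν.1, by
    rw [Submodule.smul_eq_map₂]; exact Submodule.FG.map₂ _ ρ.2 ν.2⟩⟩

end FGSubmodule

/-- The universal `u_R`-norm `u_M : M → fgMod(M)`, `m ↦ R·m`. -/
def uMfg {R M : Type*} [CommRing R] [AddCommGroup M] [Module R M] (m : M) : FGSubmodule R M :=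
  ⟨Submodule.span R {m}, Submodule.fg_span_singleton m⟩

/-- A `u_R`-seminorm on an `R`-module `M` with values in an `fgId(R)`-semimodule `N`:
`w 0 = 0`, `w (m + m') ≤ w m + w m'`, and `w (r • m) ≤ C u_R(r) • w m` for some fixed
nonzero `C ∈ fgId(R)`. Inequalities are expressed through the canonical order
`x ≤ y` iff `x + y = y`. -/
def IsURSeminorm {R M N : Type*} [CommRing R] [AddCommGroup M] [Module R M]
    [AddCommMonoid N] [Module (FGIdeal R) N] (w : M → N) : Prop :=
  w 0 = 0 ∧
    (∀ m m' : M, w (m + m') + (w m + w m') = w m + w m') ∧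
    ∃ C : FGIdeal R, C ≠ 0 ∧
      ∀ (r : R) (m : M), w (r • m) + (C * uRfg r) • w m = (C * uRfg r) • w m

section Helpers

set_option linter.unusedSectionVars false

lemma FGIdeal.one_add_one (R : Type*) [CommRing R] : (1 : FGIdeal R) + 1 = 1 := Subtype.ext (by
  show (1 : Ideal R) + 1 = 1
  simp [Ideal.one_eq_top])

variable {R N : Type*} [CommRing R] [AddCommMonoid N] [Module (FGIdeal R) N]

local notation a " ⊑ " b => a + b = b

include R

lemma Nidem (x : N) : x + x = x := by
  have : ((1 : FGIdeal R) + 1) • x = (1 : FGIdeal R) • x := by rw [FGIdeal.one_add_one]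
  simpa [add_smul] using this

lemma nle_trans {x y z : N} (h1 : x ⊑ y) (h2 : y ⊑ z) : x ⊑ z := by
  calc x + z = x + (y + z) := by rw [h2]
    _ = (x + y) + z := (add_assoc _ _ _).symm
    _ = y + z := by rw [h1]
    _ = z := h2

lemma nle_antisymm {x y : N} (h1 : x ⊑ y) (h2 : y ⊑ x) : x = y := by
  rw [← h2, add_comm, h1]

lemma add_nle {x y z : N} (h1 : x ⊑ z) (h2 : y ⊑ z) : (x + y) ⊑ z := by
  calc x + y + z = x + (y + z) := add_assoc _ _ _
    _ = x + z := by rw [h2]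
    _ = z := h1

lemma nle_add_left (x y : N) : x ⊑ (x + y) := by
  rw [← add_assoc, Nidem (R := R)]

lemma nle_add_right (x y : N) : y ⊑ (x + y) := by
  rw [add_comm x y, ← add_assoc, Nidem (R := R)]

lemma add_nle_add {x y x' y' : N} (h1 : x ⊑ x') (h2 : y ⊑ y') : (x + y) ⊑ (x' + y') :=
  add_nle (R := R) (nle_trans (R := R) h1 (nle_add_left (R := R) _ _)) (nle_trans (R := R) h2 (nle_add_right (R := R) _ _))

lemma sum_nle {ι : Type*} (s : Finset ι) (f : ι → N) (z : N) (h : ∀ i ∈ s, f i ⊑ z) :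
    (∑ i ∈ s, f i) ⊑ z := by
  induction s using Finset.cons_induction with
  | empty => simp
  | cons a s ha ih =>
      rw [Finset.sum_cons]
      exact add_nle (R := R) (h a (Finset.mem_cons_self a s))
        (ih fun i hi => h i (Finset.mem_cons.2 (Or.inr hi)))

lemma smul_nle_smul_of_le {ρ σ : FGIdeal R} (h : ρ.1 ≤ σ.1) (x : N) : (ρ • x) ⊑ (σ • x) := by
  have hs : ρ + σ = σ := Subtype.ext (by
    show ρ.1 + σ.1 = σ.1
    rw [Submodule.add_eq_sup, sup_eq_right]; exact h)
  rw [← add_smul, hs]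

lemma smul_nle_smul {σ : FGIdeal R} {x y : N} (h : x ⊑ y) : (σ • x) ⊑ (σ • y) := by
  rw [← smul_add, h]

end Helpers

section MainHelpers

variable {R M : Type*} [CommRing R] [AddCommGroup M] [Module R M]

/-- `Subtype.val : FGSubmodule R M → Submodule R M` as an additive monoid hom. -/
def FGSubmodule.valHom : FGSubmodule R M →+ Submodule R M where
  toFun := Subtype.val
  map_zero' := rfl
  map_add' A B := (Submodule.add_eq_sup A.1 B.1).symm

lemma Submodule.sum_eq_finset_sup {ι : Type*} (s : Finset ι) (f : ι → Submodule R M) :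
    ∑ i ∈ s, f i = s.sup f := by
  induction s using Finset.cons_induction with
  | empty => simp
  | cons a s ha ih => rw [Finset.sum_cons, Finset.sup_cons, ih, Submodule.add_eq_sup]

lemma sum_uMfg_val {ι : Type*} [Fintype ι] (m : ι → M) :
    (∑ i, uMfg (R := R) (m i)).1 = Submodule.span R (Set.range m) := by
  have h := map_sum (FGSubmodule.valHom (R := R) (M := M)) (fun i => uMfg (m i)) Finset.univ
  have h' : (∑ i, uMfg (R := R) (m i)).1 = ∑ i, (uMfg (R := R) (m i)).1 := h
  rw [h', Submodule.sum_eq_finset_sup, Finset.sup_univ_eq_iSup, Submodule.span_range_eq_iSup]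
  rfl

lemma exists_fin_gen (μ : FGSubmodule R M) :
    ∃ (k : ℕ) (m : Fin k → M), μ.1 = Submodule.span R (Set.range m) := by
  obtain ⟨S, hS⟩ := μ.2
  refine ⟨S.card, fun i => ((S.equivFin.symm i : S) : M), ?_⟩
  have hcomp : (fun i => ((S.equivFin.symm i : S) : M)) = Subtype.val ∘ S.equivFin.symm := rfl
  have hr : Set.range (fun i => ((S.equivFin.symm i : S) : M)) = (S : Set M) := by
    rw [hcomp, S.equivFin.symm.surjective.range_comp]
    exact Subtype.range_coe
  rw [hr, hS]

variable {N : Type*} [AddCommMonoid N] [Module (FGIdeal R) N] {w : M → N}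

include R

lemma sum_nle_sum {ι : Type*} (s : Finset ι) (f g : ι → N) (h : ∀ i ∈ s, f i + g i = g i) :
    (∑ i ∈ s, f i) + ∑ i ∈ s, g i = ∑ i ∈ s, g i := by
  induction s using Finset.cons_induction with
  | empty => simp
  | cons a s ha ih =>
      rw [Finset.sum_cons, Finset.sum_cons]
      exact add_nle_add (R := R) (h a (Finset.mem_cons_self a s))
        (ih fun i hi => h i (Finset.mem_cons.2 (Or.inr hi)))

lemma w_sum_nle (hw : IsURSeminorm (R := R) w) {ι : Type*} (s : Finset ι) (f : ι → M) :
    w (∑ i ∈ s, f i) + ∑ i ∈ s, w (f i) = ∑ i ∈ s, w (f i) := by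
  induction s using Finset.cons_induction with
  | empty => simp [hw.1]
  | cons a s ha ih =>
      rw [Finset.sum_cons, Finset.sum_cons]
      exact nle_trans (R := R) (hw.2.1 (f a) (∑ i ∈ s, f i))
        (add_nle_add (R := R) (Nidem (R := R) _) ih)

lemma mul_uRfg_le_one (C : FGIdeal R) (r : R) : (C * uRfg r).1 ≤ (1 : FGIdeal R).1 := by
  show (C.1 * Ideal.span {r} : Ideal R) ≤ (1 : Ideal R)
  rw [Ideal.one_eq_top]
  exact le_top

lemma w_smul_nle (hw : IsURSeminorm (R := R) w) (r : R) (m : M) :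
    w (r • m) + w m = w m := by
  obtain ⟨C, -, hC⟩ := hw.2.2
  refine nle_trans (R := R) (hC r m) ?_
  have := smul_nle_smul_of_le (N := N) (mul_uRfg_le_one C r) (w m)
  rwa [one_smul] at this

lemma w_nle_of_mem (hw : IsURSeminorm (R := R) w) {ι : Type*} [Fintype ι] {m : ι → M} {x : M}
    (hx : x ∈ Submodule.span R (Set.range m)) :
    w x + ∑ i, w (m i) = ∑ i, w (m i) := by
  obtain ⟨c, hc⟩ := (Submodule.mem_span_range_iff_exists_fun R).mp hx
  rw [← hc]
  refine nle_trans (R := R) (w_sum_nle hw Finset.univ fun i => c i • m i) ?_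
  exact sum_nle_sum (R := R) Finset.univ _ _ fun i _ => w_smul_nle hw (c i) (m i)

lemma sum_w_eq (hw : IsURSeminorm (R := R) w) {ι ι' : Type*} [Fintype ι] [Fintype ι']
    {m : ι → M} {m' : ι' → M}
    (h : Submodule.span R (Set.range m) = Submodule.span R (Set.range m')) :
    ∑ i, w (m i) = ∑ j, w (m' j) := by
  refine nle_antisymm (R := R) ?_ ?_
  · refine sum_nle (R := R) Finset.univ _ _ fun i _ => w_nle_of_mem hw ?_
    rw [← h]
    exact Submodule.subset_span (Set.mem_range_self i)
  · refine sum_nle (R := R) Finset.univ _ _ fun j _ => w_nle_of_mem hw ?_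
    rw [h]
    exact Submodule.subset_span (Set.mem_range_self j)

end MainHelpers


/-- Any `u_R`-seminorm `w : M → N` factors through a unique additive
monoid homomorphism `ŵ : fgMod(M) → N` with `ŵ (R·m) = w m`; explicitly
`ŵ (R·m₁ + ⋯ + R·mₖ) = w m₁ + ⋯ + w mₖ` (independently of the chosen generators), and
`ŵ (ρ • μ) ≤ ρ • ŵ μ` for all `ρ ∈ fgId(R)` and `μ ∈ fgMod(M)`. -/
theorem exists_unique_induced_hom_of_URSeminorm
    (R M N : Type*) [CommRing R] [AddCommGroup M] [Module R M]
    [AddCommMonoid N] [Module (FGIdeal R) N]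
    (w : M → N) (hw : IsURSeminorm (R := R) w) :
    (∃! what : FGSubmodule R M →+ N, ∀ m : M, what (uMfg m) = w m) ∧
    (∀ what : FGSubmodule R M →+ N, (∀ m : M, what (uMfg m) = w m) →
      (∀ (k : ℕ) (m : Fin k → M) (μ : FGSubmodule R M),
        μ.1 = Submodule.span R (Set.range m) → what μ = ∑ i, w (m i)) ∧
      (∀ (ρ : FGIdeal R) (μ : FGSubmodule R M),
        what (ρ • μ) + ρ • what μ = ρ • what μ)) := by
  classical
  have hgen := fun μ : FGSubmodule R M => exists_fin_gen μ
  choose k g hg using hgen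
  -- the explicit formula holds for any hom extending `w`
  have formula : ∀ what : FGSubmodule R M →+ N, (∀ m : M, what (uMfg m) = w m) →
      ∀ (kk : ℕ) (m : Fin kk → M) (μ : FGSubmodule R M),
        μ.1 = Submodule.span R (Set.range m) → what μ = ∑ i, w (m i) := by
    intro what hwhat kk m μ hμ
    have hμ' : μ = ∑ i, uMfg (m i) := Subtype.ext (by rw [sum_uMfg_val]; exact hμ)
    rw [hμ', map_sum]
    exact Finset.sum_congr rfl fun i _ => hwhat (m i)
  -- the construction
  set F : FGSubmodule R M → N := fun μ => ∑ i, w (g μ i) with hF_def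
  have hF : ∀ {ι : Type} [Fintype ι] (m : ι → M) (μ : FGSubmodule R M),
      μ.1 = Submodule.span R (Set.range m) → F μ = ∑ i, w (m i) := by
    intro ι _ m μ hμ
    exact sum_w_eq hw (by rw [← hg μ, ← hμ])
  have hFzero : F 0 = 0 := by
    have h0 : ((0 : FGSubmodule R M)).1 = Submodule.span R (Set.range (Fin.elim0 : Fin 0 → M)) := by
      show (⊥ : Submodule R M) = _
      rw [Set.range_eq_empty, Submodule.span_empty]
    rw [hF Fin.elim0 0 h0]
    simp
  have hFadd : ∀ μ ν : FGSubmodule R M, F (μ + ν) = F μ + F ν := by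
    intro μ ν
    have h1 : (μ + ν).1 = Submodule.span R (Set.range (Sum.elim (g μ) (g ν))) := by
      show μ.1 ⊔ ν.1 = _
      rw [hg μ, hg ν, Set.Sum.elim_range, Submodule.span_union]
    rw [hF (Sum.elim (g μ) (g ν)) _ h1, Fintype.sum_sum_type]
    rfl
  set What : FGSubmodule R M →+ N := ⟨⟨F, hFzero⟩, fun μ ν => hFadd μ ν⟩ with hWhat_def
  have hWuM : ∀ m : M, What (uMfg m) = w m := by
    intro m
    have h1 : (uMfg (R := R) m).1 = Submodule.span R (Set.range (fun _ : Fin 1 => m)) := by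
      show Submodule.span R {m} = _
      rw [Set.range_const]
    show F (uMfg m) = w m
    rw [hF (fun _ : Fin 1 => m) _ h1]
    simp
  refine ⟨⟨What, hWuM, ?_⟩, ?_⟩
  · intro what' h'
    ext μ
    rw [formula what' h' _ (g μ) μ (hg μ)]
    exact (formula What hWuM _ (g μ) μ (hg μ)).symm
  · intro what hwhat
    refine ⟨fun kk m μ h => formula what hwhat kk m μ h, ?_⟩
    intro ρ μ
    rw [formula what hwhat _ (g (ρ • μ)) (ρ • μ) (hg (ρ • μ)),
        formula what hwhat _ (g μ) μ (hg μ)]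
    refine sum_nle (R := R) Finset.univ _ _ fun j _ => ?_
    have hmem : g (ρ • μ) j ∈ ρ.1 • μ.1 := by
      have h2 : g (ρ • μ) j ∈ (ρ • μ).1 := by
        rw [hg (ρ • μ)]
        exact Submodule.subset_span (Set.mem_range_self j)
      exact h2
    obtain ⟨C, hC0, hwsm⟩ := hw.2.2
    refine Submodule.smul_induction_on
      (p := fun z => w z + ρ • ∑ i, w (g μ i) = ρ • ∑ i, w (g μ i)) hmem ?_ ?_
    · intro r hr n hn
      have hn' : w n + ∑ i, w (g μ i) = ∑ i, w (g μ i) :=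
        w_nle_of_mem hw (by rw [← hg μ]; exact hn)
      refine nle_trans (R := R) (hwsm r n)
        (nle_trans (R := R) (smul_nle_smul (σ := C * uRfg r) hn') ?_)
      refine smul_nle_smul_of_le ?_ _
      show (C.1 * Ideal.span {r} : Ideal R) ≤ ρ.1
      calc C.1 * Ideal.span {r} ≤ ⊤ * ρ.1 :=
            Ideal.mul_mono le_top (((Ideal.span_singleton_le_iff_mem ρ.1).mpr hr))
        _ = ρ.1 := Ideal.top_mul ρ.1
    · intro x y hx hy
      exact nle_trans (R := R) (hw.2.1 x y) (add_nle (R := R) hx hy)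
end

section
/- Let S be a commutative semiring and let I be a subtractive ideal of S. Let c(I) be the semiring congruence on S generated by {(a, 0) : a ∈ I} and let π : S → S/c(I) be the quotient morphism. Then the map J ↦ π(J) is an inclusion-preserving bijection from the set of subtractive ideals of S containing I onto the set of subtractive ideals of S/c(I), with inverse K ↦ π⁻¹(K), and this bijection preserves prime ideals in both directions. -/
section SemiringIdeals

variable {S : Type*} [CommSemiring S]

/-- A subset of a commutative semiring which is an ideal: it contains `0` and is closed
under addition and under multiplication by arbitrary elements. -/
def IsIdealSet (I : Set S) : Prop :=
  (0 : S) ∈ I ∧ (∀ a ∈ I, ∀ b ∈ I, a + b ∈ I) ∧ ∀ (c : S), ∀ a ∈ I, c * a ∈ I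

/-- A subset `I` is subtractive if `a + b ∈ I` and `a ∈ I` imply `b ∈ I`. -/
def IsSubtractiveSet (I : Set S) : Prop :=
  ∀ a b : S, a + b ∈ I → a ∈ I → b ∈ I

/-- A `k`-ideal (subtractive ideal) of a commutative semiring. -/
def IsKIdeal (I : Set S) : Prop := IsIdealSet I ∧ IsSubtractiveSet I

/-- An ideal of a commutative semiring is prime when its complement is multiplicatively
closed: `1 ∉ I` and `a * b ∈ I` implies `a ∈ I` or `b ∈ I`. -/
def IsPrimeSet (I : Set S) : Prop :=
  (1 : S) ∉ I ∧ ∀ a b : S, a * b ∈ I → a ∈ I ∨ b ∈ I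

/-- The semiring congruence `c(I)` generated by `{(a, 0) : a ∈ I}`. -/
def congOf (I : Set S) : RingCon S := ringConGen fun a b => a ∈ I ∧ b = 0

end SemiringIdeals
section Aux

variable {S : Type*} [CommSemiring S]

def bourne (I : Set S) (hI : IsIdealSet I) : RingCon S where
  r x y := ∃ i ∈ I, ∃ j ∈ I, x + i = y + j
  iseqv := by
    refine ⟨fun x => ⟨0, hI.1, 0, hI.1, rfl⟩, ?_, ?_⟩
    · rintro x y ⟨i, hi, j, hj, h⟩; exact ⟨j, hj, i, hi, h.symm⟩
    · rintro x y z ⟨i, hi, j, hj, h⟩ ⟨i', hi', j', hj', h'⟩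
      refine ⟨i + i', hI.2.1 _ hi _ hi', j' + j, hI.2.1 _ hj' _ hj, ?_⟩
      calc x + (i + i') = (x + i) + i' := by ring
        _ = (y + i') + j := by rw [h]; ring
        _ = (z + j') + j := by rw [h']
        _ = z + (j' + j) := by ring
  mul' := by
    rintro a b c d ⟨i, hi, j, hj, h⟩ ⟨i', hi', j', hj', h'⟩
    refine ⟨a * i' + i * c + i * i', ?_, b * j' + j * d + j * j', ?_, ?_⟩
    · exact hI.2.1 _ (hI.2.1 _ (hI.2.2 _ _ hi') _ (mul_comm i c ▸ hI.2.2 _ _ hi)) _ (hI.2.2 _ _ hi')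
    · exact hI.2.1 _ (hI.2.1 _ (hI.2.2 _ _ hj') _ (mul_comm j d ▸ hI.2.2 _ _ hj)) _ (hI.2.2 _ _ hj')
    · have : (a + i) * (c + i') = (b + j) * (d + j') := by rw [h, h']
      calc a * c + (a * i' + i * c + i * i') = (a + i) * (c + i') := by ring
        _ = (b + j) * (d + j') := this
        _ = b * d + (b * j' + j * d + j * j') := by ring
  add' := by
    rintro a b c d ⟨i, hi, j, hj, h⟩ ⟨i', hi', j', hj', h'⟩
    refine ⟨i + i', hI.2.1 _ hi _ hi', j + j', hI.2.1 _ hj _ hj', ?_⟩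
    calc a + c + (i + i') = (a + i) + (c + i') := by ring
      _ = (b + j) + (d + j') := by rw [h, h']
      _ = b + d + (j + j') := by ring

lemma congOf_eq_bourne (I : Set S) (hI : IsIdealSet I) : congOf I = bourne I hI := by
  refine RingCon.ext fun x y => ⟨fun h => ?_, fun h => ?_⟩
  · induction h with
    | of a b hab => exact ⟨0, hI.1, a, hab.1, by rw [hab.2, add_zero, zero_add]⟩
    | refl a => exact ⟨0, hI.1, 0, hI.1, rfl⟩
    | symm _ ih => exact (bourne I hI).symm ih
    | trans _ _ ih1 ih2 => exact (bourne I hI).trans ih1 ih2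
    | add _ _ ih1 ih2 => exact (bourne I hI).add ih1 ih2
    | mul _ _ ih1 ih2 => exact (bourne I hI).mul ih1 ih2
  · obtain ⟨i, hi, j, hj, h⟩ := h
    have hi0 : congOf I i 0 := RingConGen.Rel.of _ _ ⟨hi, rfl⟩
    have hj0 : congOf I j 0 := RingConGen.Rel.of _ _ ⟨hj, rfl⟩
    have h1 : congOf I (x + i) x := by
      simpa using (congOf I).add ((congOf I).refl x) hi0
    have h2 : congOf I (y + j) y := by
      simpa using (congOf I).add ((congOf I).refl y) hj0
    exact ((congOf I).symm h1).trans (h ▸ h2)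

lemma congOf_iff (I : Set S) (hI : IsIdealSet I) (x y : S) :
    congOf I x y ↔ ∃ i ∈ I, ∃ j ∈ I, x + i = y + j := by
  rw [congOf_eq_bourne I hI]; rfl

lemma pi_eq_iff (I : Set S) (hI : IsIdealSet I) (x y : S) :
    (congOf I).mk' x = (congOf I).mk' y ↔ ∃ i ∈ I, ∃ j ∈ I, x + i = y + j :=
  ((congOf I).eq).trans (congOf_iff I hI x y)

lemma pi_surj (I : Set S) : Function.Surjective (congOf I).mk' :=
  fun q => Quot.inductionOn q fun a => ⟨a, rfl⟩

lemma preimage_kIdeal (I : Set S) (hI : IsKIdeal I) (K : Set (congOf I).Quotient)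
    (hK : IsKIdeal K) : IsKIdeal ((congOf I).mk' ⁻¹' K) ∧ I ⊆ (congOf I).mk' ⁻¹' K := by
  set π := (congOf I).mk'
  constructor
  · refine ⟨⟨?_, ?_, ?_⟩, ?_⟩
    · show π 0 ∈ K; rw [map_zero]; exact hK.1.1
    · intro a ha b hb; show π (a + b) ∈ K; rw [map_add]
      exact hK.1.2.1 _ ha _ hb
    · intro c a ha; show π (c * a) ∈ K; rw [map_mul]
      exact hK.1.2.2 _ _ ha
    · intro a b hab ha
      exact hK.2 (π a) (π b) (by rw [← map_add]; exact hab) ha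
  · intro a ha
    show π a ∈ K
    have : π a = π 0 := (pi_eq_iff I hI.1 a 0).2 ⟨0, hI.1.1, a, ha, by rw [add_zero, zero_add]⟩
    rw [this, map_zero]; exact hK.1.1

lemma preimage_image_eq (I : Set S) (hI : IsKIdeal I) (J : Set S) (hJ : IsKIdeal J)
    (hIJ : I ⊆ J) : (congOf I).mk' ⁻¹' ((congOf I).mk' '' J) = J := by
  apply Set.Subset.antisymm
  · rintro x ⟨j, hj, hxj⟩
    obtain ⟨i2, hi2, i1, hi1, h⟩ := (pi_eq_iff I hI.1 j x).1 hxj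
    have hxJ : x + i1 ∈ J := h ▸ hJ.1.2.1 _ hj _ (hIJ hi2)
    exact hJ.2 i1 x (by rwa [add_comm]) (hIJ hi1)
  · exact Set.subset_preimage_image _ _

lemma image_kIdeal (I : Set S) (hI : IsKIdeal I)
    (J : Set S) (hJ : IsKIdeal J) (hIJ : I ⊆ J) : IsKIdeal ((congOf I).mk' '' J) := by
  set π := (congOf I).mk'
  refine ⟨⟨⟨0, hJ.1.1, map_zero π⟩, ?_, ?_⟩, ?_⟩
  · rintro _ ⟨a, ha, rfl⟩ _ ⟨b, hb, rfl⟩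
    exact ⟨a + b, hJ.1.2.1 _ ha _ hb, map_add π a b⟩
  · rintro c _ ⟨a, ha, rfl⟩
    obtain ⟨d, rfl⟩ := pi_surj I c
    exact ⟨d * a, hJ.1.2.2 _ _ ha, map_mul π d a⟩
  · rintro u v huv ⟨a, ha, rfl⟩
    obtain ⟨b, rfl⟩ := pi_surj I v
    have h1 : π (a + b) ∈ π '' J := by rw [map_add]; exact huv
    have hab : a + b ∈ J := by
      rw [← preimage_image_eq I hI J hJ hIJ]; exact h1
    exact ⟨b, hJ.2 a b hab ha, rfl⟩

end Aux


/-- Let `I` be a subtractive ideal of a commutative semiring `S`, let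
`c(I)` be the congruence generated by `{(a, 0) : a ∈ I}` and `π : S → S/c(I)` the
quotient morphism. Then `J ↦ π(J)` is an inclusion-preserving bijection from the
subtractive ideals of `S` containing `I` onto the subtractive ideals of `S/c(I)`, with
inverse `K ↦ π⁻¹(K)`, and it preserves prime ideals in both directions. -/
theorem quotient_correspondence_of_kIdeals
    (S : Type*) [CommSemiring S] (I : Set S) (hI : IsKIdeal I) :
    (∀ J : Set S, IsKIdeal J → I ⊆ J → IsKIdeal ((congOf I).mk' '' J)) ∧
    (∀ K : Set (congOf I).Quotient, IsKIdeal K →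
      IsKIdeal ((congOf I).mk' ⁻¹' K) ∧ I ⊆ (congOf I).mk' ⁻¹' K) ∧
    (∀ J : Set S, IsKIdeal J → I ⊆ J → (congOf I).mk' ⁻¹' ((congOf I).mk' '' J) = J) ∧
    (∀ K : Set (congOf I).Quotient, IsKIdeal K →
      (congOf I).mk' '' ((congOf I).mk' ⁻¹' K) = K) ∧
    (∀ J J' : Set S, IsKIdeal J → IsKIdeal J' → I ⊆ J → I ⊆ J' →
      (J ⊆ J' ↔ (congOf I).mk' '' J ⊆ (congOf I).mk' '' J')) ∧
    (∀ J : Set S, IsKIdeal J → I ⊆ J →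
      (IsPrimeSet J ↔ IsPrimeSet ((congOf I).mk' '' J))) := by
  set π := (congOf I).mk' with hπ
  have himg := fun J hJ hIJ => image_kIdeal I hI J hJ hIJ
  have hpre := fun K hK => preimage_kIdeal I hI K hK
  have hpi := fun J hJ hIJ => preimage_image_eq I hI J hJ hIJ
  have hip : ∀ K : Set (congOf I).Quotient, IsKIdeal K → π '' (π ⁻¹' K) = K :=
    fun K _ => Set.image_preimage_eq K (pi_surj I)
  refine ⟨himg, hpre, hpi, hip, ?_, ?_⟩
  · intro J J' hJ hJ' hIJ hIJ'
    refine ⟨fun h => Set.image_mono h, fun h => ?_⟩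
    rw [← hpi J hJ hIJ, ← hpi J' hJ' hIJ']
    exact Set.preimage_mono h
  · intro J hJ hIJ
    constructor
    · rintro ⟨h1, h2⟩
      constructor
      · rintro ⟨j, hj, hj1⟩
        have : (1 : S) ∈ J := by
          rw [← hpi J hJ hIJ]; exact ⟨j, hj, hj1⟩
        exact h1 this
      · rintro u v huv
        obtain ⟨a, rfl⟩ := pi_surj I u
        obtain ⟨b, rfl⟩ := pi_surj I v
        have hab : a * b ∈ J := by
          rw [← hpi J hJ hIJ]; rw [← map_mul] at huv; exact huv
        rcases h2 a b hab with h | h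
        · exact Or.inl ⟨a, h, rfl⟩
        · exact Or.inr ⟨b, h, rfl⟩
    · rintro ⟨h1, h2⟩
      constructor
      · intro h; exact h1 ⟨1, h, rfl⟩
      · intro a b hab
        rcases h2 (π a) (π b) (by rw [← map_mul]; exact ⟨a * b, hab, rfl⟩) with h | h
        · left; rw [← hpi J hJ hIJ]; exact h
        · right; rw [← hpi J hJ hIJ]; exact h
end

section
/- Let S be an additively idempotent commutative semiring and let X ⊆ S. Then the subtractive closure of the ideal generated by X is ⟨X⟩_k = {c ∈ S : a + c = a for some a ∈ ⟨X⟩}, where ⟨X⟩ is the ideal of S generated by X. -/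
section SemiringIdeals

variable {S : Type*} [CommSemiring S]

/-- The smallest subtractive ideal containing a subset `X` (the subtractive closure
`⟨X⟩_k`). -/
def kClosure (X : Set S) : Set S := ⋂₀ {J : Set S | IsKIdeal J ∧ X ⊆ J}

/-- The smallest ideal `⟨X⟩` containing a subset `X`. -/
def idealGen (X : Set S) : Set S := ⋂₀ {J : Set S | IsIdealSet J ∧ X ⊆ J}

end SemiringIdeals

/-- In an additively idempotent commutative semiring `S`, the
subtractive closure of the ideal generated by a subset `X` is
`⟨X⟩_k = {c ∈ S : a + c = a for some a ∈ ⟨X⟩}`. -/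
theorem kClosure_eq_of_idempotent (S : Type*) [CommSemiring S]
    (hS : ∀ a : S, a + a = a) (X : Set S) :
    kClosure X = {c : S | ∃ a ∈ idealGen X, a + c = a} := by
  have hIdeal : IsIdealSet (idealGen X) := by
    refine ⟨?_, ?_, ?_⟩
    · intro J hJ; exact hJ.1.1
    · intro a ha b hb J hJ; exact hJ.1.2.1 a (ha J hJ) b (hb J hJ)
    · intro c a ha J hJ; exact hJ.1.2.2 c a (ha J hJ)
  have hXsub : X ⊆ idealGen X := fun x hx J hJ => hJ.2 hx
  set T : Set S := {c : S | ∃ a ∈ idealGen X, a + c = a} with hT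
  have hTK : IsKIdeal T := by
    refine ⟨⟨⟨0, hIdeal.1, by simp⟩, ?_, ?_⟩, ?_⟩
    · rintro c ⟨a, ha, hac⟩ d ⟨b, hb, hbd⟩
      refine ⟨a + b, hIdeal.2.1 a ha b hb, ?_⟩
      calc a + b + (c + d) = (a + c) + (b + d) := by ring
        _ = a + b := by rw [hac, hbd]
    · rintro s c ⟨a, ha, hac⟩
      refine ⟨s * a, hIdeal.2.2 s a ha, ?_⟩
      rw [← mul_add, hac]
    · rintro c d ⟨a, ha, hacd⟩ _
      refine ⟨a, ha, ?_⟩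
      calc a + d = a + (c + d) + d := by rw [hacd]
        _ = a + (c + (d + d)) := by ring
        _ = a + (c + d) := by rw [hS d]
        _ = a := hacd
  have hXT : X ⊆ T := fun x hx => ⟨x, hXsub hx, hS x⟩
  apply Set.Subset.antisymm
  · intro c hc; exact hc T ⟨hTK, hXT⟩
  · rintro c ⟨a, ha, hac⟩ K hK
    have haK : a ∈ K := ha K ⟨hK.1.1, hK.2⟩
    exact hK.1.2 a c (by rw [hac]; exact haK) haK
end

section
/- Let X be a topological space, let x ∈ X, and let F be a presheaf of commutative rings on X. Let fgId(F) be the presheaf of additively idempotent semirings on X given on an open set U by the semiring fgId(F(U)) of finitely generated ideals of F(U), with restriction maps sending an ideal I to the ideal of F(V) generated by the image of I under the restriction F(U) → F(V). Then the canonical map φ_x from the stalk of fgId(F) at x to fgId(F_x), which sends the class of a pair (U, ⟨s₁, …, sₘ⟩) with x ∈ U and s₁, …, sₘ ∈ F(U) to the ideal of the stalk F_x generated by the germs s₁,ₓ, …, s_{m,x}, is a bijection. -/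
open CategoryTheory TopologicalSpace Opposite

/-- Representatives of germs of the presheaf `fgId(F)` at `x`: pairs of an open
neighbourhood `U` of `x` together with a finitely generated ideal of `F(U)`. -/
def FGGermRep {X : TopCat} (F : TopCat.Presheaf CommRingCat X) (x : X) : Type _ :=
  Σ U : {U : Opens X // x ∈ U}, FGIdeal ↥(F.obj (op U.1))

/-- Two representatives define the same germ when their images under the restriction
maps of the presheaf `fgId(F)` (which send an ideal `I` to the ideal generated by the
image of `I` under the restriction map of `F`) agree on a smaller open neighbourhood of
`x`. The stalk of `fgId(F)` at `x` is the corresponding filtered colimit of the sets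
`fgId(F(U))`, i.e. `Quot (fgGermRel F x)`. -/
def fgGermRel {X : TopCat} (F : TopCat.Presheaf CommRingCat X) (x : X) :
    FGGermRep F x → FGGermRep F x → Prop := fun a b =>
  ∃ (W : Opens X) (_ : x ∈ W) (h1 : W ≤ a.1.1) (h2 : W ≤ b.1.1),
    Ideal.map (F.map (homOfLE h1).op).hom a.2.1 = Ideal.map (F.map (homOfLE h2).op).hom b.2.1

namespace StalkFGAux

variable {X : TopCat} (F : TopCat.Presheaf CommRingCat X) (x : X)

lemma res_comp {W V U : Opens X} (h1 : W ≤ V) (h2 : V ≤ U) :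
    (F.map (homOfLE h1).op).hom.comp (F.map (homOfLE h2).op).hom
      = (F.map (homOfLE (h1.trans h2)).op).hom := by
  have : F.map (homOfLE (h1.trans h2)).op = F.map (homOfLE h2).op ≫ F.map (homOfLE h1).op := by
    rw [← F.map_comp]; rfl
  rw [this]; rfl

lemma res_res {W V U : Opens X} (h1 : W ≤ V) (h2 : V ≤ U) (a : F.obj (op U)) :
    F.map (homOfLE h1).op (F.map (homOfLE h2).op a)
      = F.map (homOfLE (h1.trans h2)).op a :=
  by have := RingHom.congr_fun (res_comp F h1 h2) a; exact this

lemma map_res_res {W V U : Opens X} (h1 : W ≤ V) (h2 : V ≤ U) (I : Ideal (F.obj (op U))) :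
    Ideal.map (F.map (homOfLE h1).op).hom (Ideal.map (F.map (homOfLE h2).op).hom I)
      = Ideal.map (F.map (homOfLE (h1.trans h2)).op).hom I := by
  rw [Ideal.map_map, res_comp]

lemma germ_comp_res {V U : Opens X} (h : V ≤ U) (hV : x ∈ V) (hU : x ∈ U) :
    (F.germ V x hV).hom.comp (F.map (homOfLE h).op).hom = (F.germ U x hU).hom :=
  congrArg CommRingCat.Hom.hom (F.germ_res (homOfLE h) x hV)

lemma map_germ_map_res {V U : Opens X} (h : V ≤ U) (hV : x ∈ V) (hU : x ∈ U)
    (I : Ideal (F.obj (op U))) :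
    Ideal.map (F.germ V x hV).hom (Ideal.map (F.map (homOfLE h).op).hom I)
      = Ideal.map (F.germ U x hU).hom I := by
  rw [Ideal.map_map, germ_comp_res]

lemma mem_map_res_of_mem {W V U : Opens X} (h1 : W ≤ V) (h2 : V ≤ U)
    {J : Ideal (F.obj (op U))} {a : F.obj (op V)}
    (ha : a ∈ Ideal.map (F.map (homOfLE h2).op).hom J) :
    F.map (homOfLE h1).op a ∈ Ideal.map (F.map (homOfLE (h1.trans h2)).op).hom J := by
  rw [← map_res_res F h1 h2]
  exact Ideal.mem_map_of_mem _ ha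

/-- Any element of the image ideal in the stalk is the germ of an element of the
image ideal on some smaller neighbourhood. -/
lemma exists_res_of_mem_map {V : Opens X} (hV : x ∈ V) (I : Ideal (F.obj (op V)))
    {y : F.stalk x} (hy : y ∈ Ideal.map (F.germ V x hV).hom I) :
    ∃ (W : Opens X) (hW : x ∈ W) (h : W ≤ V) (t : F.obj (op W)),
      t ∈ Ideal.map (F.map (homOfLE h).op).hom I ∧ F.germ W x hW t = y := by
  have hy' : y ∈ Ideal.span ((F.germ V x hV).hom '' I) := hy
  clear hy
  induction hy' using Submodule.span_induction with
  | mem z hz =>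
    obtain ⟨t0, ht0, rfl⟩ := hz
    refine ⟨V, hV, le_rfl, F.map (homOfLE le_rfl).op t0, Ideal.mem_map_of_mem _ ht0, ?_⟩
    exact F.germ_res_apply (homOfLE le_rfl) x hV t0
  | zero => exact ⟨V, hV, le_rfl, 0, Ideal.zero_mem _, map_zero _⟩
  | add z1 z2 hz1 hz2 ih1 ih2 =>
    obtain ⟨W1, hW1, h1, t1, ht1, hg1⟩ := ih1
    obtain ⟨W2, hW2, h2, t2, ht2, hg2⟩ := ih2
    refine ⟨W1 ⊓ W2, Opens.mem_inf.mpr ⟨hW1, hW2⟩, inf_le_left.trans h1,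
      F.map (homOfLE (inf_le_left : W1 ⊓ W2 ≤ W1)).op t1
        + F.map (homOfLE (inf_le_right : W1 ⊓ W2 ≤ W2)).op t2, ?_, ?_⟩
    · refine Ideal.add_mem _ (mem_map_res_of_mem F inf_le_left h1 ht1) ?_
      have := mem_map_res_of_mem F (inf_le_right : W1 ⊓ W2 ≤ W2) h2 ht2
      convert this using 3
    · rw [map_add, F.germ_res_apply, F.germ_res_apply, hg1, hg2]
  | smul r z hz ih =>
    obtain ⟨W1, hW1, h1, t1, ht1, hg1⟩ := ih
    obtain ⟨U', hU', r', hr'⟩ := F.germ_exist r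
    refine ⟨U' ⊓ W1, Opens.mem_inf.mpr ⟨hU', hW1⟩, inf_le_right.trans h1,
      F.map (homOfLE (inf_le_left : U' ⊓ W1 ≤ U')).op r'
        * F.map (homOfLE (inf_le_right : U' ⊓ W1 ≤ W1)).op t1, ?_, ?_⟩
    · exact Ideal.mul_mem_left _ _ (mem_map_res_of_mem F inf_le_right h1 ht1)
    · rw [map_mul, F.germ_res_apply, F.germ_res_apply, hr', hg1]
      rfl

/-- From inclusion of image ideals in the stalk, deduce inclusion on a neighbourhood. -/
lemma exists_le_of_map_le {U V : Opens X} (hU : x ∈ U) (hV : x ∈ V)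
    (I : Ideal (F.obj (op U))) (hI : I.FG) (J : Ideal (F.obj (op V)))
    (hle : Ideal.map (F.germ U x hU).hom I ≤ Ideal.map (F.germ V x hV).hom J) :
    ∃ (W : Opens X) (_ : x ∈ W) (h1 : W ≤ U) (h2 : W ≤ V),
      Ideal.map (F.map (homOfLE h1).op).hom I ≤ Ideal.map (F.map (homOfLE h2).op).hom J := by
  obtain ⟨n, s, hs⟩ := Submodule.fg_iff_exists_fin_generating_family.mp hI
  -- for each generator, find a neighbourhood where its restriction is in the image of J
  have key : ∀ i : Fin n, ∃ (W : Opens X) (hW : x ∈ W) (h1 : W ≤ U) (h2 : W ≤ V),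
      F.map (homOfLE h1).op (s i) ∈ Ideal.map (F.map (homOfLE h2).op).hom J := by
    intro i
    have hsi : s i ∈ I := by rw [← hs]; exact Submodule.subset_span ⟨i, rfl⟩
    have : F.germ U x hU (s i) ∈ Ideal.map (F.germ V x hV).hom J :=
      hle (Ideal.mem_map_of_mem _ hsi)
    obtain ⟨W, hW, h, t, ht, hg⟩ := exists_res_of_mem_map F x hV J this
    obtain ⟨W', hW', iW, iU, e⟩ := F.germ_eq x hW hU t (s i) hg
    have hW'W : W' ≤ W := iW.le
    have hW'U : W' ≤ U := iU.le
    refine ⟨W', hW', hW'U, hW'W.trans h, ?_⟩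
    have e' : F.map (homOfLE hW'U).op (s i) = F.map (homOfLE hW'W).op t := by
      have h1 : (homOfLE hW'U) = iU := Subsingleton.elim _ _
      have h2 : (homOfLE hW'W) = iW := Subsingleton.elim _ _
      rw [h1, h2, e]
    rw [e']
    exact mem_map_res_of_mem F hW'W h ht
  choose W hW h1 h2 hmem using key
  refine ⟨U ⊓ V ⊓ Finset.univ.inf W, ⟨⟨hU, hV⟩, ?_⟩,
    inf_le_left.trans inf_le_left, inf_le_left.trans inf_le_right, ?_⟩
  · have : x ∈ Finset.univ.inf W := by
      rw [← SetLike.mem_coe, Opens.coe_finset_inf]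
      simp [hW]
    exact this
  · set W₀ : Opens X := U ⊓ V ⊓ Finset.univ.inf W with hW₀
    rw [← hs, Ideal.map_le_iff_le_comap, Submodule.span_le]
    rintro _ ⟨i, rfl⟩
    rw [SetLike.mem_coe, Ideal.mem_comap]
    have hle1 : W₀ ≤ W i := inf_le_right.trans (Finset.inf_le (Finset.mem_univ i))
    have heq : F.map (homOfLE (inf_le_left.trans inf_le_left : W₀ ≤ U)).op (s i)
        = F.map (homOfLE hle1).op (F.map (homOfLE (h1 i)).op (s i)) := by
      rw [res_res]
    rw [heq]
    have := mem_map_res_of_mem F hle1 (h2 i) (hmem i)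
    convert this using 3

end StalkFGAux

open StalkFGAux in
/-- Let `F` be a presheaf of commutative rings on `X` and `x ∈ X`.
The canonical map `φₓ` from the stalk of `fgId(F)` at `x` to `fgId(Fₓ)`, sending the
class of `(U, ⟨s₁, …, sₘ⟩)` (with `x ∈ U` and `sᵢ ∈ F(U)`) to the ideal of the stalk
`Fₓ` generated by the germs `s₁,ₓ, …, sₘ,ₓ`, is a bijection. -/
theorem stalk_fgId_bijective {X : TopCat} (F : TopCat.Presheaf CommRingCat X) (x : X) :
    ∃ φ : Quot (fgGermRel F x) → FGIdeal ↥(F.stalk x),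
      (∀ (U : Opens X) (hU : x ∈ U) (m : ℕ) (s : Fin m → ↥(F.obj (op U))),
        φ (Quot.mk _
            ⟨⟨U, hU⟩, ⟨Ideal.span (Set.range s), Submodule.fg_span (Set.finite_range s)⟩⟩) =
          ⟨Ideal.span (Set.range fun i => F.germ U x hU (s i)),
            Submodule.fg_span (Set.finite_range _)⟩) ∧
      Function.Bijective φ := by
  classical
  set φ' : FGGermRep F x → FGIdeal ↥(F.stalk x) := fun a =>
    ⟨Ideal.map (F.germ a.1.1 x a.1.2).hom a.2.1, a.2.2.map _⟩ with hφ'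
  have hsound : ∀ a b, fgGermRel F x a b → φ' a = φ' b := by
    rintro a b ⟨W, hxW, h1, h2, he⟩
    apply Subtype.ext
    show Ideal.map (F.germ a.1.1 x a.1.2).hom a.2.1 = Ideal.map (F.germ b.1.1 x b.1.2).hom b.2.1
    rw [← map_germ_map_res F x h1 hxW a.1.2, he, map_germ_map_res]
  refine ⟨Quot.lift φ' hsound, ?_, ?_, ?_⟩
  · intro U hU m s
    apply Subtype.ext
    show Ideal.map (F.germ U x hU).hom (Ideal.span (Set.range s)) = _
    rw [Ideal.map_span, ← Set.range_comp]
    rfl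
  · -- injectivity
    intro qa qb
    refine Quot.induction_on₂ qa qb ?_
    intro a b h
    have h' : Ideal.map (F.germ a.1.1 x a.1.2).hom a.2.1 = Ideal.map (F.germ b.1.1 x b.1.2).hom b.2.1 :=
      congrArg Subtype.val h
    obtain ⟨W1, hW1, hU1, hV1, hle1⟩ :=
      exists_le_of_map_le F x a.1.2 b.1.2 a.2.1 a.2.2 b.2.1 h'.le
    obtain ⟨W2, hW2, hU2, hV2, hle2⟩ :=
      exists_le_of_map_le F x b.1.2 a.1.2 b.2.1 b.2.2 a.2.1 h'.ge
    apply Quot.sound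
    refine ⟨W1 ⊓ W2, ⟨hW1, hW2⟩, inf_le_left.trans hU1, inf_le_left.trans hV1, le_antisymm ?_ ?_⟩
    · rw [← map_res_res F (inf_le_left : W1 ⊓ W2 ≤ W1) hU1,
        ← map_res_res F (inf_le_left : W1 ⊓ W2 ≤ W1) hV1]
      exact Ideal.map_mono hle1
    · have := Ideal.map_mono (f := (F.map (homOfLE (inf_le_right : W1 ⊓ W2 ≤ W2)).op).hom) hle2
      rw [map_res_res F (inf_le_right : W1 ⊓ W2 ≤ W2) hU2,
        map_res_res F (inf_le_right : W1 ⊓ W2 ≤ W2) hV2] at this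
      convert this using 2
  · -- surjectivity
    rintro ⟨J, hJ⟩
    obtain ⟨n, g, hg⟩ := Submodule.fg_iff_exists_fin_generating_family.mp hJ
    choose U hU s hs using fun i => F.germ_exist (g i)
    set W : Opens X := Finset.univ.inf U with hW
    have hxW : x ∈ W := by
      rw [← SetLike.mem_coe, Opens.coe_finset_inf]; simp [hU]
    have hWU : ∀ i, W ≤ U i := fun i => Finset.inf_le (Finset.mem_univ i)
    set s' : Fin n → F.obj (op W) := fun i => F.map (homOfLE (hWU i)).op (s i) with hs'
    refine ⟨Quot.mk _ ⟨⟨W, hxW⟩,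
      ⟨Ideal.span (Set.range s'), Submodule.fg_span (Set.finite_range s')⟩⟩, ?_⟩
    apply Subtype.ext
    show Ideal.map (F.germ W x hxW).hom (Ideal.span (Set.range s')) = J
    rw [Ideal.map_span, ← Set.range_comp, ← hg]
    congr 1
    ext y
    constructor
    · rintro ⟨i, rfl⟩
      exact ⟨i, by simp only [Function.comp, hs']; rw [F.germ_res_apply, hs]⟩
    · rintro ⟨i, rfl⟩
      exact ⟨i, by simp only [Function.comp, hs']; rw [F.germ_res_apply, hs]⟩
end
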